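/- (q-Binomial theorem) For q ∈ (0,1), a ∈ ℂ, and z ∈ ℂ with |z| < 1, one has ∑_{n=0}^∞ ((a;q)_n/(q;q)_n)·zⁿ = (az;q)_∞/(z;q)_∞, where (x;q)_n = ∏_{k=0}^{n-1}(1-x·q^k). -/

import Mathlib

open Complex

/-- Finite q-Pochhammer symbol (x;q)_n = ∏_{k=0}^{n-1}(1 - x q^k) in ℂ. -/
noncomputable def qPochC (x q : ℂ) (n : ℕ) : ℂ := ∏ k ∈ Finset.range n, (1 - x * q ^ k)

/-- Infinite q-Pochhammer symbol (x;q)_∞ = ∏_{k=0}^∞ (1 - x q^k) in ℂ. -/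
noncomputable def qPochInfC (x q : ℂ) : ℂ := ∏' k : ℕ, (1 - x * q ^ k)

section aux

variable {q : ℝ} (hq0 : 0 < q) (hq1 : q < 1)

lemma qPochC_succ (x Q : ℂ) (n : ℕ) :
    qPochC x Q (n + 1) = qPochC x Q n * (1 - x * Q ^ n) := Finset.prod_range_succ _ _

-- 1 - t ≥ exp(-(t/(1-t))) for 0 ≤ t < 1
lemma one_sub_ge_exp {t : ℝ} (h0 : 0 ≤ t) (h1 : t < 1) :
    Real.exp (-(t / (1 - t))) ≤ 1 - t := by
  have h1t : 0 < 1 - t := by linarith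
  have h := Real.add_one_le_exp (t / (1 - t))
  have h2 : (1 - t)⁻¹ ≤ Real.exp (t / (1 - t)) := by
    have : (1 - t)⁻¹ = t / (1 - t) + 1 := by field_simp; ring
    rw [this]; exact h
  rw [Real.exp_neg]
  rw [inv_le_comm₀ (Real.exp_pos _) h1t]
  exact h2

include hq0 hq1 in
lemma geom_partial_le (n : ℕ) : ∑ k ∈ Finset.range n, q ^ k ≤ (1 - q)⁻¹ := by
  have hsum : Summable fun k : ℕ => q ^ k :=
    summable_geometric_of_lt_one hq0.le hq1
  calc ∑ k ∈ Finset.range n, q ^ k ≤ ∑' k : ℕ, q ^ k := by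
        apply Summable.sum_le_tsum _ (fun k _ => by positivity) hsum
    _ = (1 - q)⁻¹ := tsum_geometric_of_lt_one hq0.le hq1

include hq0 hq1 in
/-- Lower bound for the real product ∏ (1 - q^{k+1}). -/
lemma qq_lower (n : ℕ) :
    Real.exp (-(q / (1 - q) ^ 2)) ≤ ∏ k ∈ Finset.range n, (1 - q ^ (k + 1)) := by
  have h1q : 0 < 1 - q := by linarith
  have key : ∀ k : ℕ, Real.exp (-(q ^ (k + 1) / (1 - q))) ≤ 1 - q ^ (k + 1) := by
    intro k
    have hk0 : 0 ≤ q ^ (k + 1) := by positivity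
    have hk1 : q ^ (k + 1) < 1 := pow_lt_one₀ hq0.le hq1 (Nat.succ_ne_zero k)
    refine le_trans (Real.exp_le_exp.2 ?_) (one_sub_ge_exp hk0 hk1)
    have hle : 1 - q ≤ 1 - q ^ (k + 1) := by
      have : q ^ (k + 1) ≤ q := by
        calc q ^ (k + 1) ≤ q ^ 1 := pow_le_pow_of_le_one hq0.le hq1.le (by omega)
          _ = q := pow_one q
      linarith
    have := div_le_div_of_nonneg_left hk0 h1q hle
    linarith
  calc Real.exp (-(q / (1 - q) ^ 2))
      ≤ Real.exp (∑ k ∈ Finset.range n, -(q ^ (k + 1) / (1 - q))) := by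
        apply Real.exp_le_exp.2
        have hs : ∑ k ∈ Finset.range n, q ^ (k + 1) / (1 - q) ≤ q / (1 - q) ^ 2 := by
          rw [← Finset.sum_div]
          have hs2 : ∑ k ∈ Finset.range n, q ^ (k + 1) ≤ q * (1 - q)⁻¹ := by
            have : ∑ k ∈ Finset.range n, q ^ (k + 1)
                = q * ∑ k ∈ Finset.range n, q ^ k := by
              rw [Finset.mul_sum]
              exact Finset.sum_congr rfl fun k _ => (pow_succ' q k)
            rw [this]
            exact mul_le_mul_of_nonneg_left (geom_partial_le hq0 hq1 n) hq0.le
          calc (∑ k ∈ Finset.range n, q ^ (k + 1)) / (1 - q)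
              ≤ (q * (1 - q)⁻¹) / (1 - q) := by gcongr
            _ = q / (1 - q) ^ 2 := by field_simp
        have : ∑ k ∈ Finset.range n, -(q ^ (k + 1) / (1 - q))
            = -∑ k ∈ Finset.range n, q ^ (k + 1) / (1 - q) := by
          rw [Finset.sum_neg_distrib]
        rw [this]
        linarith
    _ = ∏ k ∈ Finset.range n, Real.exp (-(q ^ (k + 1) / (1 - q))) := by
        rw [Real.exp_sum]
    _ ≤ ∏ k ∈ Finset.range n, (1 - q ^ (k + 1)) := by
        apply Finset.prod_le_prod (fun k _ => (Real.exp_pos _).le) (fun k _ => key k)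

include hq0 hq1 in
/-- Upper bound on the norm of the finite q-Pochhammer symbol. -/
lemma qPochC_norm_le (x : ℂ) (n : ℕ) :
    ‖qPochC x (q : ℂ) n‖ ≤ Real.exp (‖x‖ * (1 - q)⁻¹) := by
  have h1q : 0 < 1 - q := by linarith
  rw [qPochC]
  calc ‖∏ k ∈ Finset.range n, (1 - x * (q : ℂ) ^ k)‖
      ≤ ∏ k ∈ Finset.range n, ‖(1 - x * (q : ℂ) ^ k)‖ := Finset.norm_prod_le _ _
    _ ≤ ∏ k ∈ Finset.range n, Real.exp (‖x‖ * q ^ k) := by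
        apply Finset.prod_le_prod (fun k _ => norm_nonneg _)
        intro k _
        have h1 : ‖(1 : ℂ) - x * (q : ℂ) ^ k‖ ≤ 1 + ‖x‖ * q ^ k := by
          calc ‖(1 : ℂ) - x * (q : ℂ) ^ k‖ ≤ ‖(1 : ℂ)‖ + ‖x * (q : ℂ) ^ k‖ :=
                norm_sub_le _ _
            _ = 1 + ‖x‖ * q ^ k := by
                rw [norm_one, norm_mul, norm_pow, Complex.norm_real,
                  Real.norm_of_nonneg hq0.le]
        refine h1.trans ?_
        have := Real.add_one_le_exp (‖x‖ * q ^ k)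
        linarith
    _ = Real.exp (∑ k ∈ Finset.range n, ‖x‖ * q ^ k) := by rw [Real.exp_sum]
    _ ≤ Real.exp (‖x‖ * (1 - q)⁻¹) := by
        apply Real.exp_le_exp.2
        rw [← Finset.mul_sum]
        exact mul_le_mul_of_nonneg_left (geom_partial_le hq0 hq1 n) (norm_nonneg x)

omit hq0 hq1 in
lemma qPochC_qq_eq (n : ℕ) :
    qPochC (q : ℂ) (q : ℂ) n = ((∏ k ∈ Finset.range n, (1 - q ^ (k + 1)) : ℝ) : ℂ) := by
  rw [qPochC]
  push_cast
  exact Finset.prod_congr rfl fun k _ => by ring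

include hq0 hq1 in
lemma qPochC_qq_norm_ge (n : ℕ) :
    Real.exp (-(q / (1 - q) ^ 2)) ≤ ‖qPochC (q : ℂ) (q : ℂ) n‖ := by
  rw [qPochC_qq_eq n, Complex.norm_real]
  exact (qq_lower hq0 hq1 n).trans (le_abs_self _)

include hq0 hq1 in
lemma qPochC_qq_ne_zero (n : ℕ) : qPochC (q : ℂ) (q : ℂ) n ≠ 0 := by
  intro h
  have := qPochC_qq_norm_ge hq0 hq1 n
  rw [h, norm_zero] at this
  exact absurd this (not_le.2 (Real.exp_pos _))

/-- The coefficient of the q-binomial series. -/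
noncomputable def qCoef (a : ℂ) (q : ℝ) (n : ℕ) : ℂ :=
  qPochC a (q : ℂ) n / qPochC (q : ℂ) (q : ℂ) n

lemma qCoef_zero (a : ℂ) : qCoef a q 0 = 1 := by
  simp [qCoef, qPochC]

include hq0 hq1 in
lemma qCoef_norm_le (a : ℂ) (n : ℕ) :
    ‖qCoef a q n‖ ≤ Real.exp (‖a‖ * (1 - q)⁻¹) * Real.exp (q / (1 - q) ^ 2) := by
  rw [qCoef, norm_div]
  rw [div_le_iff₀ (lt_of_lt_of_le (Real.exp_pos _) (qPochC_qq_norm_ge hq0 hq1 n))]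
  calc ‖qPochC a (q : ℂ) n‖ ≤ Real.exp (‖a‖ * (1 - q)⁻¹) := qPochC_norm_le hq0 hq1 a n
    _ = Real.exp (‖a‖ * (1 - q)⁻¹) * Real.exp (q / (1 - q) ^ 2)
        * Real.exp (-(q / (1 - q) ^ 2)) := by
        rw [mul_assoc, ← Real.exp_add]; simp
    _ ≤ _ := by
        apply mul_le_mul_of_nonneg_left (qPochC_qq_norm_ge hq0 hq1 n)
        positivity

include hq0 hq1 in
/-- The q-binomial series converges absolutely for ‖w‖ < 1. -/
lemma qSeries_summable (a : ℂ) {w : ℂ} (hw : ‖w‖ < 1) :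
    Summable (fun n : ℕ => qCoef a q n * w ^ n) := by
  set K := Real.exp (‖a‖ * (1 - q)⁻¹) * Real.exp (q / (1 - q) ^ 2) with hK
  apply Summable.of_norm_bounded (g := fun n => K * ‖w‖ ^ n)
  · exact (summable_geometric_of_lt_one (norm_nonneg w) hw).mul_left K
  · intro n
    rw [norm_mul, norm_pow]
    exact mul_le_mul_of_nonneg_right (qCoef_norm_le hq0 hq1 a n) (by positivity)

/-- The q-binomial series. -/
noncomputable def qSeries (a : ℂ) (q : ℝ) (w : ℂ) : ℂ := ∑' n : ℕ, qCoef a q n * w ^ n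

include hq0 hq1 in
lemma one_sub_qpow_ne_zero (k : ℕ) : (1 : ℂ) - (q : ℂ) ^ (k + 1) ≠ 0 := by
  have hk1 : q ^ (k + 1) < 1 := pow_lt_one₀ hq0.le hq1 (Nat.succ_ne_zero k)
  intro h
  have : ((1 - q ^ (k + 1) : ℝ) : ℂ) = 0 := by push_cast; linear_combination h
  have := Complex.ofReal_eq_zero.1 this
  linarith

include hq0 hq1 in
/-- Recurrence for the coefficients. -/
lemma qCoef_rec (a : ℂ) (n : ℕ) :
    qCoef a q (n + 1) * (1 - (q : ℂ) ^ (n + 1)) = qCoef a q n * (1 - a * (q : ℂ) ^ n) := by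
  have hden : qPochC (q : ℂ) (q : ℂ) n ≠ 0 := qPochC_qq_ne_zero hq0 hq1 n
  have hfac : (1 : ℂ) - (q : ℂ) * (q : ℂ) ^ n ≠ 0 := by
    have h := one_sub_qpow_ne_zero hq0 hq1 n
    rwa [pow_succ'] at h
  rw [qCoef, qCoef, qPochC_succ, qPochC_succ]
  rw [show ((q : ℂ)) ^ (n + 1) = (q : ℂ) * (q : ℂ) ^ n from pow_succ' _ _]
  rw [div_mul_eq_mul_div, div_mul_eq_mul_div, div_eq_div_iff (mul_ne_zero hden hfac) hden]
  ring

include hq0 hq1 in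
lemma norm_qpow_mul_lt (z : ℂ) (hz : ‖z‖ < 1) (N : ℕ) : ‖(q : ℂ) ^ N * z‖ < 1 := by
  rw [norm_mul, norm_pow, Complex.norm_real, Real.norm_of_nonneg hq0.le]
  have h1 : q ^ N ≤ 1 := pow_le_one₀ hq0.le hq1.le
  have h2 : 0 < q ^ N := by positivity
  nlinarith [norm_nonneg z]

include hq0 hq1 in
/-- The functional equation (1-w)·S(w) = (1-aw)·S(qw). -/
lemma qSeries_funcEq (a : ℂ) {w : ℂ} (hw : ‖w‖ < 1) :
    (1 - w) * qSeries a q w = (1 - a * w) * qSeries a q ((q : ℂ) * w) := by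
  have hqw : ‖(q : ℂ) * w‖ < 1 := by
    have := norm_qpow_mul_lt hq0 hq1 w hw 1
    rwa [pow_one] at this
  have hS := (qSeries_summable hq0 hq1 a hw).hasSum
  have hSq := (qSeries_summable hq0 hq1 a hqw).hasSum
  have h1 : HasSum (fun n => (1 - w) * (qCoef a q n * w ^ n))
      ((1 - w) * qSeries a q w) := hS.mul_left _
  have h2 : HasSum (fun n => (1 - a * w) * (qCoef a q n * ((q : ℂ) * w) ^ n))
      ((1 - a * w) * qSeries a q ((q : ℂ) * w)) := hSq.mul_left _
  have h3 := h1.sub h2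
  set g : ℕ → ℂ := fun n => qCoef a q n * (1 - (q : ℂ) ^ n) * w ^ n with hgdef
  have hkey : ∀ n : ℕ, (1 - w) * (qCoef a q n * w ^ n)
      - (1 - a * w) * (qCoef a q n * ((q : ℂ) * w) ^ n) = g n - g (n + 1) := by
    intro n
    have hrec := qCoef_rec hq0 hq1 a n
    have h4 : g (n + 1) = qCoef a q n * (1 - a * (q : ℂ) ^ n) * w ^ (n + 1) := by
      show qCoef a q (n + 1) * (1 - (q : ℂ) ^ (n + 1)) * w ^ (n + 1) = _
      rw [hrec]
    rw [h4]
    show _ = qCoef a q n * (1 - (q : ℂ) ^ n) * w ^ n - _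
    rw [mul_pow]
    ring
  have hgsum : Summable g := by
    set K := Real.exp (‖a‖ * (1 - q)⁻¹) * Real.exp (q / (1 - q) ^ 2) with hK
    apply Summable.of_norm_bounded (g := fun n => (K * 2) * ‖w‖ ^ n)
    · exact (summable_geometric_of_lt_one (norm_nonneg w) hw).mul_left _
    · intro n
      have hb1 : ‖(1 : ℂ) - (q : ℂ) ^ n‖ ≤ 2 := by
        calc ‖(1 : ℂ) - (q : ℂ) ^ n‖ ≤ ‖(1 : ℂ)‖ + ‖(q : ℂ) ^ n‖ := norm_sub_le _ _
          _ = 1 + q ^ n := by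
              rw [norm_one, norm_pow, Complex.norm_real, Real.norm_of_nonneg hq0.le]
          _ ≤ 2 := by
              have : q ^ n ≤ 1 := pow_le_one₀ hq0.le hq1.le
              linarith
      have hb2 := qCoef_norm_le hq0 hq1 a n
      rw [hgdef]
      simp only [norm_mul, norm_pow]
      calc ‖qCoef a q n‖ * ‖(1 : ℂ) - (q : ℂ) ^ n‖ * ‖w‖ ^ n
          ≤ K * 2 * ‖w‖ ^ n := by
            apply mul_le_mul_of_nonneg_right _ (by positivity)
            exact mul_le_mul hb2 hb1 (norm_nonneg _) (by positivity)
        _ = (K * 2) * ‖w‖ ^ n := by ring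
  have hgsum1 : Summable (fun n => g (n + 1)) := (summable_nat_add_iff 1).2 hgsum
  have h6 : (1 - w) * qSeries a q w - (1 - a * w) * qSeries a q ((q : ℂ) * w)
      = ∑' n : ℕ, (g n - g (n + 1)) := by
    rw [← h3.tsum_eq]
    exact tsum_congr hkey
  have h7 : ∑' n : ℕ, (g n - g (n + 1)) = 0 := by
    rw [Summable.tsum_sub hgsum hgsum1]
    have h8 : ∑' n : ℕ, g n = g 0 + ∑' n : ℕ, g (n + 1) := Summable.tsum_eq_zero_add hgsum
    have h9 : g 0 = 0 := by simp [hgdef]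
    rw [h8, h9, zero_add, sub_self]
  have := h6.trans h7
  exact sub_eq_zero.1 this

include hq0 hq1 in
/-- Iterated functional equation. -/
lemma qSeries_iter (a : ℂ) {z : ℂ} (hz : ‖z‖ < 1) (N : ℕ) :
    qSeries a q z * qPochC z (q : ℂ) N
      = qPochC (a * z) (q : ℂ) N * qSeries a q ((q : ℂ) ^ N * z) := by
  induction N with
  | zero => simp [qPochC]
  | succ N ih =>
    have hw : ‖(q : ℂ) ^ N * z‖ < 1 := norm_qpow_mul_lt hq0 hq1 z hz N
    have hfe := qSeries_funcEq hq0 hq1 a hw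
    have e1 : (q : ℂ) * ((q : ℂ) ^ N * z) = (q : ℂ) ^ (N + 1) * z := by ring
    rw [e1] at hfe
    rw [qPochC_succ, qPochC_succ]
    linear_combination (1 - z * (q : ℂ) ^ N) * ih
      + qPochC (a * z) (q : ℂ) N * hfe

include hq0 hq1 in
lemma qlog_summable (x : ℂ) :
    Summable (fun k : ℕ => Complex.log (1 - x * (q : ℂ) ^ k)) := by
  apply Summable.of_norm_bounded_eventually_nat (g := fun k => (3 / 2 * ‖x‖) * q ^ k)
  · exact (summable_geometric_of_lt_one hq0.le hq1).mul_left _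
  · have htend : Filter.Tendsto (fun k : ℕ => ‖x‖ * q ^ k) Filter.atTop (nhds 0) := by
      have := tendsto_pow_atTop_nhds_zero_of_lt_one hq0.le hq1
      simpa using this.const_mul ‖x‖
    filter_upwards [htend.eventually_le_const (by norm_num : (0:ℝ) < 1/2)] with k hk
    have hnorm : ‖-(x * (q : ℂ) ^ k)‖ = ‖x‖ * q ^ k := by
      rw [norm_neg, norm_mul, norm_pow, Complex.norm_real, Real.norm_of_nonneg hq0.le]
    have h1 : (1 : ℂ) - x * (q : ℂ) ^ k = 1 + -(x * (q : ℂ) ^ k) := by ring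
    rw [h1]
    calc ‖Complex.log (1 + -(x * (q : ℂ) ^ k))‖
        ≤ 3 / 2 * ‖-(x * (q : ℂ) ^ k)‖ := by
          apply Complex.norm_log_one_add_half_le_self
          rw [hnorm]; exact hk
      _ = (3 / 2 * ‖x‖) * q ^ k := by rw [hnorm]; ring

include hq0 hq1 in
lemma qfactors_multipliable (x : ℂ) :
    Multipliable (fun k : ℕ => 1 - x * (q : ℂ) ^ k) := by
  by_cases hzero : ∃ m : ℕ, 1 - x * (q : ℂ) ^ m = 0
  · obtain ⟨m, hm⟩ := hzero
    refine ⟨0, ?_⟩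
    have hev : ∀ᶠ s : Finset ℕ in Filter.atTop,
        ∏ i ∈ s, (1 - x * (q : ℂ) ^ i) = 0 := by
      filter_upwards [Filter.eventually_ge_atTop ({m} : Finset ℕ)] with s hs
      exact Finset.prod_eq_zero (Finset.singleton_subset_iff.1 hs) hm
    exact (tendsto_const_nhds : Filter.Tendsto (fun _ : Finset ℕ => (0 : ℂ))
      Filter.atTop (nhds 0)).congr' (hev.mono fun s hs => hs.symm)
  · push_neg at hzero
    exact Complex.multipliable_of_summable_log (qlog_summable hq0 hq1 x)

include hq0 hq1 in
lemma qfactor_ne_zero {z : ℂ} (hz : ‖z‖ < 1) (k : ℕ) :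
    (1 : ℂ) - z * (q : ℂ) ^ k ≠ 0 := by
  intro h
  have h1 : z * (q : ℂ) ^ k = 1 := by linear_combination -h
  have h2 : ‖z * (q : ℂ) ^ k‖ < 1 := by
    have := norm_qpow_mul_lt hq0 hq1 z hz k
    rwa [mul_comm] at this
  rw [h1, norm_one] at h2
  exact lt_irrefl _ h2

include hq0 hq1 in
lemma qPochInfC_ne_zero {z : ℂ} (hz : ‖z‖ < 1) : qPochInfC z (q : ℂ) ≠ 0 := by
  have h2 : Complex.exp (∑' k : ℕ, Complex.log (1 - z * (q : ℂ) ^ k))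
      = ∏' k : ℕ, (1 - z * (q : ℂ) ^ k) := Complex.cexp_tsum_eq_tprod
    (fun k => qfactor_ne_zero hq0 hq1 hz k) (qlog_summable hq0 hq1 z)
  rw [qPochInfC]
  rw [← h2]
  exact Complex.exp_ne_zero _

include hq0 hq1 in
lemma qSeries_sub_one_bound (a : ℂ) {z : ℂ} (hz : ‖z‖ < 1) (w : ℂ) (hw : ‖w‖ ≤ ‖z‖) :
    ‖qSeries a q w - 1‖
      ≤ (Real.exp (‖a‖ * (1 - q)⁻¹) * Real.exp (q / (1 - q) ^ 2)) * (1 - ‖z‖)⁻¹ * ‖w‖ := by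
  set K := Real.exp (‖a‖ * (1 - q)⁻¹) * Real.exp (q / (1 - q) ^ 2) with hK
  have hK0 : 0 ≤ K := by positivity
  have hw1 : ‖w‖ < 1 := lt_of_le_of_lt hw hz
  have hsum := qSeries_summable hq0 hq1 a hw1
  have hnorm : Summable (fun n : ℕ => ‖qCoef a q n * w ^ n‖) := by
    apply Summable.of_nonneg_of_le (fun n => norm_nonneg _) _
      ((summable_geometric_of_lt_one (norm_nonneg w) hw1).mul_left K)
    intro n
    rw [norm_mul, norm_pow]
    exact mul_le_mul_of_nonneg_right (qCoef_norm_le hq0 hq1 a n) (by positivity)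
  have hnorm1 : Summable (fun n : ℕ => ‖qCoef a q (n + 1) * w ^ (n + 1)‖) :=
    (summable_nat_add_iff 1).2 hnorm
  have h0 : qSeries a q w = 1 + ∑' n : ℕ, qCoef a q (n + 1) * w ^ (n + 1) := by
    rw [qSeries, Summable.tsum_eq_zero_add hsum, qCoef_zero, pow_zero, mul_one]
  rw [h0, add_sub_cancel_left]
  have hmaj : Summable (fun n : ℕ => (K * ‖w‖) * ‖z‖ ^ n) :=
    (summable_geometric_of_lt_one (norm_nonneg z) hz).mul_left _
  have hle : ∀ n : ℕ, ‖qCoef a q (n + 1) * w ^ (n + 1)‖ ≤ (K * ‖w‖) * ‖z‖ ^ n := by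
    intro n
    rw [norm_mul, norm_pow]
    calc ‖qCoef a q (n + 1)‖ * ‖w‖ ^ (n + 1)
        ≤ K * ‖w‖ ^ (n + 1) :=
          mul_le_mul_of_nonneg_right (qCoef_norm_le hq0 hq1 a (n + 1)) (by positivity)
      _ = (K * ‖w‖) * ‖w‖ ^ n := by ring
      _ ≤ (K * ‖w‖) * ‖z‖ ^ n :=
          mul_le_mul_of_nonneg_left (pow_le_pow_left₀ (norm_nonneg w) hw n) (by positivity)
  calc ‖∑' n : ℕ, qCoef a q (n + 1) * w ^ (n + 1)‖
      ≤ ∑' n : ℕ, ‖qCoef a q (n + 1) * w ^ (n + 1)‖ := norm_tsum_le_tsum_norm hnorm1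
    _ ≤ ∑' n : ℕ, (K * ‖w‖) * ‖z‖ ^ n := Summable.tsum_le_tsum hle hnorm1 hmaj
    _ = (K * ‖w‖) * (1 - ‖z‖)⁻¹ := by
        rw [tsum_mul_left, tsum_geometric_of_lt_one (norm_nonneg z) hz]
    _ = K * (1 - ‖z‖)⁻¹ * ‖w‖ := by ring

include hq0 hq1 in
lemma qSeries_tendsto_one (a : ℂ) {z : ℂ} (hz : ‖z‖ < 1) :
    Filter.Tendsto (fun N : ℕ => qSeries a q ((q : ℂ) ^ N * z))
      Filter.atTop (nhds 1) := by
  set C := (Real.exp (‖a‖ * (1 - q)⁻¹) * Real.exp (q / (1 - q) ^ 2)) * (1 - ‖z‖)⁻¹ with hC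
  have hnorm : ∀ N : ℕ, ‖(q : ℂ) ^ N * z‖ = q ^ N * ‖z‖ := by
    intro N
    rw [norm_mul, norm_pow, Complex.norm_real, Real.norm_of_nonneg hq0.le]
  have key : Filter.Tendsto (fun N : ℕ => ‖qSeries a q ((q : ℂ) ^ N * z) - 1‖)
      Filter.atTop (nhds 0) := by
    apply squeeze_zero (fun N => norm_nonneg _)
      (g := fun N : ℕ => C * (q ^ N * ‖z‖))
    · intro N
      have hle : ‖(q : ℂ) ^ N * z‖ ≤ ‖z‖ := by
        rw [hnorm N]
        have h1 : q ^ N ≤ 1 := pow_le_one₀ hq0.le hq1.le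
        nlinarith [norm_nonneg z]
      have := qSeries_sub_one_bound hq0 hq1 a hz ((q : ℂ) ^ N * z) hle
      rw [hnorm N] at this
      exact this
    · have h1 := ((tendsto_pow_atTop_nhds_zero_of_lt_one hq0.le hq1).const_mul C).mul_const ‖z‖
      simpa [mul_assoc] using h1
  have h2 := tendsto_iff_norm_sub_tendsto_zero.2 key
  rwa [← tendsto_iff_norm_sub_tendsto_zero] at key

end aux

theorem stmt_10 (q : ℝ) (hq0 : 0 < q) (hq1 : q < 1) (a z : ℂ) (hz : ‖z‖ < 1) :
    ∑' n : ℕ, qPochC a (q : ℂ) n / qPochC (q : ℂ) (q : ℂ) n * z ^ n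
      = qPochInfC (a * z) (q : ℂ) / qPochInfC z (q : ℂ) := by
  have hLHS : (∑' n : ℕ, qPochC a (q : ℂ) n / qPochC (q : ℂ) (q : ℂ) n * z ^ n)
      = qSeries a q z := by
    rw [qSeries]
    exact tsum_congr fun n => rfl
  rw [hLHS]
  have hPz : qPochInfC z (q : ℂ) ≠ 0 := qPochInfC_ne_zero hq0 hq1 hz
  rw [eq_div_iff hPz]
  -- limits
  have hmz := (qfactors_multipliable hq0 hq1 z).hasProd.tendsto_prod_nat
  have hmaz := (qfactors_multipliable hq0 hq1 (a * z)).hasProd.tendsto_prod_nat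
  have t1 : Filter.Tendsto (fun N : ℕ => qSeries a q z * qPochC z (q : ℂ) N)
      Filter.atTop (nhds (qSeries a q z * qPochInfC z (q : ℂ))) := by
    apply Filter.Tendsto.const_mul
    exact hmz
  have t2 : Filter.Tendsto
      (fun N : ℕ => qPochC (a * z) (q : ℂ) N * qSeries a q ((q : ℂ) ^ N * z))
      Filter.atTop (nhds (qPochInfC (a * z) (q : ℂ) * 1)) :=
    Filter.Tendsto.mul hmaz (qSeries_tendsto_one hq0 hq1 a hz)
  have heq : (fun N : ℕ => qSeries a q z * qPochC z (q : ℂ) N)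
      = fun N : ℕ => qPochC (a * z) (q : ℂ) N * qSeries a q ((q : ℂ) ^ N * z) :=
    funext fun N => qSeries_iter hq0 hq1 a hz N
  rw [heq] at t1
  have := tendsto_nhds_unique t1 t2
  rw [mul_one] at this
  exact this
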